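/- arXiv:1302.3958 — 5 statements merged into one kernel-verified Lean document; each statement's English description precedes it below -/
import Mathlib

section
/- For the matrix A - λD with A = [[-dr/(Km), -d],[r(1-d/(Km)), 0]] and D = [[d11, -d12],[-d21, d22]], if K > d/m, det D > 0, all d_ij > 0, and d12 < (dr d22/(Km) + d d21)/(r(1 - d/(Km))), then det(A - λD) > 0 and tr(A - λD) < 0 for all λ ≥ 0. -/
theorem simple_market_diffusion_stable
    (r K m d d11 d12 d21 d22 : ℝ)
    (hr : 0 < r) (hK : 0 < K) (hm : 0 < m) (hd : 0 < d)
    (hd11 : 0 < d11) (hd12 : 0 < d12) (hd21 : 0 < d21) (hd22 : 0 < d22)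
    (hKdm : K > d/m)
    (hdetD : 0 < Matrix.det (!![d11, -d12; -d21, d22] : Matrix (Fin 2) (Fin 2) ℝ))
    (hcrit : d12 < (d*r*d22/(K*m) + d*d21)/(r*(1 - d/(K*m)))) :
    ∀ lam : ℝ, 0 ≤ lam →
      0 < Matrix.det ((!![-d*r/(K*m), -d; r*(1 - d/(K*m)), 0] : Matrix (Fin 2) (Fin 2) ℝ)
            - lam • (!![d11, -d12; -d21, d22] : Matrix (Fin 2) (Fin 2) ℝ)) ∧
      Matrix.trace ((!![-d*r/(K*m), -d; r*(1 - d/(K*m)), 0] : Matrix (Fin 2) (Fin 2) ℝ)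
            - lam • (!![d11, -d12; -d21, d22] : Matrix (Fin 2) (Fin 2) ℝ)) < 0 := by
  intro lam hlam
  have hKm : 0 < K * m := mul_pos hK hm
  have h1 : 0 < 1 - d/(K*m) := by
    have : d/(K*m) < 1 := by
      rw [div_lt_one hKm]
      calc d = (d/m) * m := by field_simp
        _ < K * m := by exact mul_lt_mul_of_pos_right hKdm hm
    linarith
  have hb : 0 < r * (1 - d/(K*m)) := mul_pos hr h1
  have ha : 0 < d * r / (K * m) := div_pos (mul_pos hd hr) hKm
  have hcrit' : d12 * (r * (1 - d/(K*m))) < d*r*d22/(K*m) + d*d21 := by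
    rw [lt_div_iff₀ hb] at hcrit
    linarith
  have ha2 : -(d*r)/(K*m) < 0 := by rw [neg_div]; linarith
  simp [Matrix.det_fin_two, Matrix.trace_fin_two] at hdetD ⊢
  constructor
  · have t1 := mul_pos hd hb
    have t2 := mul_nonneg hlam (sub_nonneg.2 hcrit'.le)
    have t3 := mul_nonneg (mul_nonneg hlam hlam) (sub_nonneg.2 hdetD.le)
    ring_nf at t1 t2 t3 ⊢
    linarith [t1,t2,t3]
  · nlinarith [mul_nonneg hlam hd11.le, mul_nonneg hlam hd22.le, ha2]
end

section
/- For the matrix A_r = [[(m²-d²)/(ma) - r, -d²/m],[(d-m)²/(am), -d(m-d)/m]], if m > d, r > (m-d)/a, and a > 1, then tr(A_r) < 0; combined with det A_r > 0 this implies both eigenvalues of A_r have negative real part. -/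
theorem ratio_dependent_jacobian_stable
    (r m d a : ℝ) (hr : 0 < r) (hm : 0 < m) (hd : 0 < d) (ha : 0 < a)
    (hmd : m > d) (hrc : r > (m-d)/a) (ha1 : a > 1) :
    Matrix.trace (!![(m^2-d^2)/(m*a) - r, -d^2/m;
                     (d-m)^2/(a*m), -d*(m-d)/m] : Matrix (Fin 2) (Fin 2) ℝ) < 0 ∧
    ((0 < Matrix.det (!![(m^2-d^2)/(m*a) - r, -d^2/m;
                         (d-m)^2/(a*m), -d*(m-d)/m] : Matrix (Fin 2) (Fin 2) ℝ)) →
      ∀ z : ℂ, ((!![(m^2-d^2)/(m*a) - r, -d^2/m;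
                    (d-m)^2/(a*m), -d*(m-d)/m] : Matrix (Fin 2) (Fin 2) ℝ).map
                  (Complex.ofReal)).charpoly.IsRoot z → z.re < 0) := by
  set A : Matrix (Fin 2) (Fin 2) ℝ :=
    !![(m^2-d^2)/(m*a) - r, -d^2/m;
       (d-m)^2/(a*m), -d*(m-d)/m] with hA
  have hm0 : m ≠ 0 := ne_of_gt hm
  have ha0 : a ≠ 0 := ne_of_gt ha
  have htr : A.trace = (m^2-d^2)/(m*a) - r + (-d*(m-d)/m) := by
    rw [hA, Matrix.trace_fin_two_of]
  have hrc' : m - d < r * a := by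
    rw [gt_iff_lt, div_lt_iff₀ ha] at hrc; exact hrc
  have htrneg : A.trace < 0 := by
    rw [htr]
    have e : (m^2-d^2)/(m*a) - r + (-d*(m-d)/m)
        = ((m-d) - r*a)/a + (m-d)*d*(1-a)/(m*a) := by
      field_simp
      ring
    rw [e]
    have h1 : ((m-d) - r*a)/a < 0 := by
      apply div_neg_of_neg_of_pos _ ha; linarith
    have h2 : (m-d)*d*(1-a)/(m*a) ≤ 0 := by
      apply div_nonpos_of_nonpos_of_nonneg _ (le_of_lt (mul_pos hm ha))
      have h3 : (0:ℝ) ≤ (m-d)*d := by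
        have : (0:ℝ) ≤ m - d := by linarith
        positivity
      nlinarith
    linarith
  refine ⟨htrneg, fun hdet z hz => ?_⟩
  have hcp : (A.map Complex.ofReal).charpoly
      = (Polynomial.X - Polynomial.C ((A 0 0 : ℝ) : ℂ))
        * (Polynomial.X - Polynomial.C ((A 1 1 : ℝ) : ℂ))
        - Polynomial.C ((A 0 1 : ℝ) : ℂ) * Polynomial.C ((A 1 0 : ℝ) : ℂ) := by
    rw [Matrix.charpoly, Matrix.det_fin_two, Matrix.charmatrix_apply_eq,
      Matrix.charmatrix_apply_eq,
      Matrix.charmatrix_apply_ne _ _ _ (by decide),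
      Matrix.charmatrix_apply_ne _ _ _ (by decide)]
    simp [Matrix.map_apply]
  rw [Polynomial.IsRoot, hcp] at hz
  simp only [Polynomial.eval_sub, Polynomial.eval_mul, Polynomial.eval_X,
    Polynomial.eval_C] at hz
  set p := A 0 0
  set q := A 1 1
  set u := A 0 1
  set v := A 1 0
  have htr2 : A.trace = p + q := Matrix.trace_fin_two A
  have hdet2 : A.det = p * q - u * v := Matrix.det_fin_two A
  rw [htr2] at htrneg
  rw [hdet2] at hdet
  have hre : (z.re - p) * (z.re - q) - z.im * z.im - u * v = 0 := by
    have := congrArg Complex.re hz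
    simpa [Complex.sub_re, Complex.sub_im, Complex.mul_re,
      Complex.ofReal_re, Complex.ofReal_im] using this
  have him : (z.re - p) * z.im + z.im * (z.re - q) = 0 := by
    have := congrArg Complex.im hz
    simpa [Complex.sub_re, Complex.sub_im, Complex.mul_im,
      Complex.ofReal_re, Complex.ofReal_im] using this
  by_cases hy : z.im = 0
  · rw [hy] at hre
    nlinarith [sq_nonneg z.re]
  · have hfac : z.im * (2 * z.re - (p + q)) = 0 := by ring_nf; linarith [him]
    have h2 : 2 * z.re - (p + q) = 0 := by
      rcases mul_eq_zero.mp hfac with h | h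
      · exact absurd h hy
      · exact h
    linarith
end

section
/- Suppose m > d, r > (m-d)/a, a > 1, d_ij > 0 with d11 d22 - d12 d21 > 0, and d12 < (ad/(m-d)) d11 + (ad²/(m-d)²) d21 + (-(m+d)/(m-d) + amr/(m-d)²) d22. Then for every λ ≥ 0 the matrix A_r - λD has negative trace and positive determinant, where A_r = [[(m²-d²)/(ma) - r, -d²/m],[(d-m)²/(am), -d(m-d)/m]] and D = [[d11,-d12],[-d21,d22]]. -/
set_option maxHeartbeats 1000000 in
theorem ratio_dependent_diffusion_stable
    (r m d a d11 d12 d21 d22 : ℝ)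
    (hr : 0 < r) (hm : 0 < m) (hd : 0 < d) (ha : 0 < a)
    (hmd : m > d) (hrc : r > (m-d)/a) (ha1 : a > 1)
    (hd11 : 0 < d11) (hd12 : 0 < d12) (hd21 : 0 < d21) (hd22 : 0 < d22)
    (hdetD : 0 < d11*d22 - d12*d21)
    (hcrit : d12 < (a*d/(m-d))*d11 + (a*d^2/(m-d)^2)*d21
        + (-(m+d)/(m-d) + a*m*r/(m-d)^2)*d22) :
    ∀ lam : ℝ, 0 ≤ lam →
      Matrix.trace ((!![(m^2-d^2)/(m*a) - r, -d^2/m;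
                        (d-m)^2/(a*m), -d*(m-d)/m] : Matrix (Fin 2) (Fin 2) ℝ)
          - lam • (!![d11, -d12; -d21, d22] : Matrix (Fin 2) (Fin 2) ℝ)) < 0 ∧
      0 < Matrix.det ((!![(m^2-d^2)/(m*a) - r, -d^2/m;
                          (d-m)^2/(a*m), -d*(m-d)/m] : Matrix (Fin 2) (Fin 2) ℝ)
          - lam • (!![d11, -d12; -d21, d22] : Matrix (Fin 2) (Fin 2) ℝ)) := by
  have hmd' : (0:ℝ) < m - d := by linarith
  have hne : m - d ≠ 0 := ne_of_gt hmd'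
  have hra : m - d < r * a := (div_lt_iff₀ ha).mp hrc
  -- cleared critical condition
  have hcrit' : d12*(m-d)^2 < a*d*(m-d)*d11 + a*d^2*d21 + (-(m+d)*(m-d) + a*m*r)*d22 := by
    have h := mul_lt_mul_of_pos_right hcrit (show (0:ℝ) < (m-d)^2 by positivity)
    have e : ((a*d/(m-d))*d11 + (a*d^2/(m-d)^2)*d21 + (-(m+d)/(m-d) + a*m*r/(m-d)^2)*d22)
        * (m-d)^2 = a*d*(m-d)*d11 + a*d^2*d21 + (-(m+d)*(m-d) + a*m*r)*d22 := by
      field_simp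
    rw [e] at h; exact h
  -- trace of A is negative
  have htr0 : ((m^2-d^2)/(m*a) - r) + (-d*(m-d)/m) < 0 := by
    rw [show ((m^2-d^2)/(m*a) - r) + (-d*(m-d)/m)
        = ((m^2-d^2) - r*(m*a) + (-d*(m-d)*a))/(m*a) from by field_simp]
    apply div_neg_of_neg_of_pos _ (by positivity)
    nlinarith [mul_lt_mul_of_pos_left hra hm, mul_pos (mul_pos (sub_pos.mpr ha1) hd) hmd']
  -- det of A is positive
  have hdetA : 0 < ((m^2-d^2)/(m*a) - r)*(-d*(m-d)/m) - (-d^2/m)*((d-m)^2/(a*m)) := by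
    rw [show ((m^2-d^2)/(m*a) - r)*(-d*(m-d)/m) - (-d^2/m)*((d-m)^2/(a*m))
        = (d*(m-d)*(r*a - (m-d)))/(m*a) from by field_simp; ring]
    exact div_pos (mul_pos (mul_pos hd hmd') (by linarith)) (by positivity)
  -- S < 0
  have hS : ((m^2-d^2)/(m*a) - r)*d22 + (-d*(m-d)/m)*d11 + (-d^2/m)*d21
      + ((d-m)^2/(a*m))*d12 < 0 := by
    rw [show ((m^2-d^2)/(m*a) - r)*d22 + (-d*(m-d)/m)*d11 + (-d^2/m)*d21
        + ((d-m)^2/(a*m))*d12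
        = (((m^2-d^2) - r*(m*a))*d22 + (-d*(m-d)*a)*d11 + (-d^2*a)*d21
          + (d-m)^2*d12)/(m*a) from by field_simp]
    apply div_neg_of_neg_of_pos _ (by positivity)
    nlinarith [hcrit']
  intro lam hlam
  constructor
  · simp only [Matrix.trace_fin_two, Matrix.sub_apply, Matrix.smul_apply,
      Matrix.of_apply, Matrix.cons_val', Matrix.cons_val_zero, Matrix.cons_val_one,
      Matrix.head_cons, Matrix.empty_val', Matrix.cons_val_fin_one, smul_eq_mul,
      Matrix.head_fin_const]
    nlinarith [mul_nonneg hlam hd11.le, mul_nonneg hlam hd22.le]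
  · simp only [Matrix.det_fin_two, Matrix.sub_apply, Matrix.smul_apply,
      Matrix.of_apply, Matrix.cons_val', Matrix.cons_val_zero, Matrix.cons_val_one,
      Matrix.head_cons, Matrix.empty_val', Matrix.cons_val_fin_one, smul_eq_mul,
      Matrix.head_fin_const]
    have edet : (((m^2-d^2)/(m*a) - r) - lam*d11) * ((-d*(m-d)/m) - lam*d22)
        - ((-d^2/m) - lam*(-d12)) * (((d-m)^2/(a*m)) - lam*(-d21))
        = (((m^2-d^2)/(m*a) - r)*(-d*(m-d)/m) - (-d^2/m)*((d-m)^2/(a*m)))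
          - lam * (((m^2-d^2)/(m*a) - r)*d22 + (-d*(m-d)/m)*d11 + (-d^2/m)*d21
            + ((d-m)^2/(a*m))*d12)
          + lam^2 * (d11*d22 - d12*d21) := by ring
    rw [edet]
    nlinarith [mul_nonneg hlam (neg_nonneg.mpr hS.le),
      mul_nonneg (mul_nonneg hlam hlam) hdetD.le]
end

section
/- Let A = [a_ij] be a 2×2 real matrix with det A > 0, a11 < 0, a12 < 0, a21 > 0, a22 < 0, and let δ₁, δ₂, ρ₁, ρ₂, ū, v̄ > 0, ρ₁', ρ₂' < 0. If ρ₁'ū ρ₂'v̄ < ρ₁ρ₂ and -1/v̄ < ρ₁'/ρ₁, then det B > 0 for B = [[a11 - 2δ₁ρ₁, a12 - 2δ₁ρ₁'ū],[a21 - 2δ₂ρ₂'v̄, a22 - 2δ₂ρ₂]]. -/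
theorem patch_matrix_det_positive
    (a11 a12 a21 a22 δ1 δ2 ρ1 ρ2 ρ1' ρ2' ub vb : ℝ)
    (hdetA : 0 < a11*a22 - a12*a21)
    (h11 : a11 < 0) (h12 : a12 < 0) (h21 : 0 < a21) (h22 : a22 < 0)
    (hδ1 : 0 < δ1) (hδ2 : 0 < δ2) (hρ1 : 0 < ρ1) (hρ2 : 0 < ρ2)
    (hub : 0 < ub) (hvb : 0 < vb) (hρ1' : ρ1' < 0) (hρ2' : ρ2' < 0)
    (hprod : ρ1'*ub*(ρ2'*vb) < ρ1*ρ2)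
    (hineq : -1/vb < ρ1'/ρ1)
    (hentry : a22/a21 < ρ1'*ub/ρ1) :
    0 < Matrix.det (!![a11 - 2*δ1*ρ1, a12 - 2*δ1*ρ1'*ub;
                       a21 - 2*δ2*ρ2'*vb, a22 - 2*δ2*ρ2] : Matrix (Fin 2) (Fin 2) ℝ) := by
  rw [Matrix.det_fin_two_of]
  have hentry' : a22 * ρ1 < ρ1' * ub * a21 := by
    have := (div_lt_div_iff₀ h21 hρ1).mp hentry
    linarith
  have h1 : ρ1 * a22 - ρ1' * ub * a21 < 0 := by linarith [hentry']
  have h2 : ρ2 * a11 - ρ2' * vb * a12 < 0 := by nlinarith [mul_pos hρ2 (neg_pos.mpr h11), mul_pos (mul_pos hvb (neg_pos.mpr hρ2')) (neg_pos.mpr h12)]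
  nlinarith [mul_pos hδ1 hδ2, mul_pos hδ1 (neg_pos.mpr h1), mul_pos hδ2 (neg_pos.mpr h2),
    mul_pos (mul_pos hδ1 hδ2) (sub_pos.mpr hprod)]
end

section
/- For ρ₁(v) = (α+v)/(1+v), ρ₂(u) = (β+u)/(1+u) with α, β > 1 and ū, v̄ > 0, the product condition ρ₁'(v̄)ū · ρ₂'(ū)v̄ < ρ₁(v̄)ρ₂(ū) holds. -/
lemma deriv_frac (a x : ℝ) (hx : 0 < x) :
    deriv (fun v : ℝ => (a + v)/(1 + v)) x = (1 - a)/(1 + x)^2 := by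
  have hne : (1 + x) ≠ 0 := by positivity
  have h := ((hasDerivAt_const x a).add (hasDerivAt_id x)).div
      ((hasDerivAt_const x 1).add (hasDerivAt_id x)) hne
  have h2 : HasDerivAt (fun v : ℝ => (a + v)/(1 + v)) ((1 - a)/(1 + x)^2) x := by
    refine h.congr_deriv ?_
    simp only [Pi.add_apply, id_eq]
    field_simp
    ring
  exact h2.deriv

theorem example_migration_product_condition
    (α β ub vb : ℝ) (hα : 1 < α) (hβ : 1 < β) (hub : 0 < ub) (hvb : 0 < vb) :
    deriv (fun v : ℝ => (α + v)/(1 + v)) vb * ub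
      * (deriv (fun u : ℝ => (β + u)/(1 + u)) ub * vb)
      < (fun v : ℝ => (α + v)/(1 + v)) vb * (fun u : ℝ => (β + u)/(1 + u)) ub := by
  simp only [deriv_frac α vb hvb, deriv_frac β ub hub]
  have h1 : (0:ℝ) < 1 + vb := by linarith
  have h2 : (0:ℝ) < 1 + ub := by linarith
  rw [show (1-α)/(1+vb)^2*ub*((1-β)/(1+ub)^2*vb)
      = ((1-α)*ub*((1-β)*vb))/((1+vb)^2*(1+ub)^2) by field_simp,
    show (α+vb)/(1+vb)*((β+ub)/(1+ub)) = ((α+vb)*(β+ub))/((1+vb)*(1+ub)) by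
      rw [div_mul_div_comm],
    div_lt_div_iff₀ (by positivity) (by positivity)]
  have k1 : (α-1)*ub < (α+vb)*(1+ub) := by nlinarith
  have k2 : (β-1)*vb < (β+ub)*(1+vb) := by nlinarith
  have p1 : (0:ℝ) < (α-1)*ub := by nlinarith
  have p2 : (0:ℝ) < (β-1)*vb := by nlinarith
  have k3 := mul_lt_mul'' k1 k2 p1.le p2.le
  have k4 := mul_lt_mul_of_pos_right k3 (mul_pos h1 h2)
  nlinarith [k4]
end
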